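/- Let X be a locally compact, separable, completely metrizable space and ▷ an open irreflexive binary relation on X (a dominance relation). Then the set of complete continuous binary relations on X that are Grodal-transitive (x ⪰ y ≻ z ⪰ w implies x ⪰ w) and strictly monotone with respect to ▷ (x ▷ y implies x ≻ y) is a closed subset of the space of closed binary relations under the closed convergence topology. -/

import Mathlib

open Filter Topology MeasureTheory

/-- A binary relation on `X`, viewed as a set of pairs, is complete. -/
def CompleteRel {X : Type*} (R : Set (X × X)) : Prop :=
  ∀ x y : X, (x, y) ∈ R ∨ (y, x) ∈ R

/-- The strict part of a relation. -/
def StrictPref {X : Type*} (R : Set (X × X)) (x y : X) : Prop :=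
  (x, y) ∈ R ∧ (y, x) ∉ R

/-- A relation is locally strict. -/
def LocallyStrict {X : Type*} [TopologicalSpace X] (R : Set (X × X)) : Prop :=
  ∀ x y : X, (x, y) ∈ R → ∀ V ∈ 𝓝 ((x, y) : X × X), ∃ p ∈ V, StrictPref R p.1 p.2

/-- Convergence of a sequence of relations in the closed convergence topology. -/
def ClosedConv {X : Type*} [TopologicalSpace X] (R : ℕ → Set (X × X)) (S : Set (X × X)) : Prop :=
  (∀ p ∈ S, ∃ u : ℕ → X × X, Tendsto u atTop (𝓝 p) ∧ ∀ n, u n ∈ R n) ∧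
  (∀ φ : ℕ → ℕ, StrictMono φ → ∀ u : ℕ → X × X, (∀ k, u k ∈ R (φ k)) →
    ∀ p : X × X, Tendsto u atTop (𝓝 p) → p ∈ S)

/-- Grodal transitivity: `x ⪰ y ≻ z ⪰ w` implies `x ⪰ w`. -/
def GrodalTrans {X : Type*} (R : Set (X × X)) : Prop :=
  ∀ x y z w : X, (x, y) ∈ R → StrictPref R y z → (z, w) ∈ R → (x, w) ∈ R

/-- Strict monotonicity with respect to a dominance relation `D`. -/
def StrictMonoWrt {X : Type*} (R : Set (X × X)) (D : Set (X × X)) : Prop :=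
  ∀ x y : X, (x, y) ∈ D → StrictPref R x y

theorem stmt7 {X : Type*} [TopologicalSpace X] [PolishSpace X] [LocallyCompactSpace X]
    (D : Set (X × X)) (hDopen : IsOpen D) (hDirr : ∀ x : X, (x, x) ∉ D)
    (R : ℕ → Set (X × X))
    (hR : ∀ n, CompleteRel (R n) ∧ IsClosed (R n) ∧ GrodalTrans (R n) ∧
      StrictMonoWrt (R n) D)
    (S : Set (X × X)) (hScl : IsClosed S)
    (hconv : ClosedConv R S) :
    CompleteRel S ∧ GrodalTrans S ∧ StrictMonoWrt S D := by
  obtain ⟨hconv1, hconv2⟩ := hconv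
  refine ⟨?_, ?_, ?_⟩
  · -- Completeness
    intro x y
    by_cases h : {n : ℕ | (x, y) ∈ R n}.Infinite
    · left
      exact hconv2 _ (Nat.nth_strictMono h) (fun _ => (x, y))
        (fun k => Nat.nth_mem_of_infinite h k) (x, y) tendsto_const_nhds
    · right
      have h2 : {n : ℕ | (y, x) ∈ R n}.Infinite := by
        rw [Set.not_infinite] at h
        have : {n : ℕ | (x, y) ∉ R n} ⊆ {n : ℕ | (y, x) ∈ R n} := by
          intro n hn
          rcases (hR n).1 x y with h1 | h1
          · exact absurd h1 hn
          · exact h1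
        refine Set.Infinite.mono this ?_
        have := Set.Finite.infinite_compl (s := {n : ℕ | (x, y) ∈ R n}) h
        simpa [Set.compl_setOf] using this
      exact hconv2 _ (Nat.nth_strictMono h2) (fun _ => (y, x))
        (fun k => Nat.nth_mem_of_infinite h2 k) (y, x) tendsto_const_nhds
  · -- Grodal transitivity
    intro x y z w hxy hyz hzw
    obtain ⟨a, ha, haR⟩ := hconv1 (x, y) hxy
    obtain ⟨c, hc, hcR⟩ := hconv1 (z, w) hzw
    by_cases hinf : {n : ℕ | ((a n).1, (c n).2) ∉ R n}.Infinite
    · -- derive contradiction with (z, y) ∉ S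
      exfalso
      apply hyz.2
      set φ := Nat.nth (· ∈ {n : ℕ | ((a n).1, (c n).2) ∉ R n})
      have hφmem : ∀ k, ((a (φ k)).1, (c (φ k)).2) ∉ R (φ k) := fun k =>
        Nat.nth_mem_of_infinite hinf k
      have hstep : ∀ k, ((c (φ k)).1, (a (φ k)).2) ∈ R (φ k) := by
        intro k
        obtain ⟨hcomp, _, hgro, _⟩ := hR (φ k)
        have hstrict : StrictPref (R (φ k)) (c (φ k)).2 (a (φ k)).1 := by
          refine ⟨?_, hφmem k⟩
          rcases hcomp (a (φ k)).1 (c (φ k)).2 with h1 | h1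
          · exact absurd h1 (hφmem k)
          · exact h1
        exact hgro _ _ _ _ (hcR (φ k)) hstrict (haR (φ k))
      refine hconv2 φ (Nat.nth_strictMono hinf)
        (fun k => ((c (φ k)).1, (a (φ k)).2)) hstep (z, y) ?_
      have hφt : Tendsto φ atTop atTop := (Nat.nth_strictMono hinf).tendsto_atTop
      have h1 : Tendsto (fun k => (c (φ k)).1) atTop (𝓝 z) :=
        (((continuous_fst.tendsto (z, w)).comp hc).comp hφt)
      have h2 : Tendsto (fun k => (a (φ k)).2) atTop (𝓝 y) :=
        (((continuous_snd.tendsto (x, y)).comp ha).comp hφt)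
      exact h1.prodMk_nhds h2
    · rw [Set.not_infinite] at hinf
      obtain ⟨N, hN⟩ := hinf.bddAbove
      have hmem : ∀ k, ((a (k + (N + 1))).1, (c (k + (N + 1))).2) ∈ R (k + (N + 1)) := by
        intro k
        by_contra hcon
        have : k + (N + 1) ≤ N := hN hcon
        omega
      refine hconv2 (fun k => k + (N + 1)) (fun i j hij => by simpa using Nat.add_lt_add_right hij (N + 1))
        (fun k => ((a (k + (N + 1))).1, (c (k + (N + 1))).2)) hmem (x, w) ?_
      have hφt : Tendsto (fun k => k + (N + 1)) atTop atTop :=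
        tendsto_add_atTop_nat (N + 1)
      have h1 : Tendsto (fun k => (a (k + (N + 1))).1) atTop (𝓝 x) :=
        (((continuous_fst.tendsto (x, y)).comp ha).comp hφt)
      have h2 : Tendsto (fun k => (c (k + (N + 1))).2) atTop (𝓝 w) :=
        (((continuous_snd.tendsto (z, w)).comp hc).comp hφt)
      exact h1.prodMk_nhds h2
  · -- Strict monotonicity
    intro x y hxyD
    constructor
    · exact hconv2 id strictMono_id (fun _ => (x, y))
        (fun n => ((hR n).2.2.2 x y hxyD).1) (x, y) tendsto_const_nhds
    · intro hyxS
      obtain ⟨u, hu, huR⟩ := hconv1 (y, x) hyxS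
      have hswap : Tendsto (fun n => Prod.swap (u n)) atTop (𝓝 ((x, y) : X × X)) := by
        have := (continuous_swap.tendsto ((y, x) : X × X)).comp hu
        exact this
      have hev : ∀ᶠ n in atTop, Prod.swap (u n) ∈ D :=
        hswap (hDopen.mem_nhds hxyD)
      obtain ⟨n, hn⟩ := hev.exists
      have hstrict := (hR n).2.2.2 (u n).2 (u n).1 hn
      exact hstrict.2 (by simpa using huR n)
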